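/- The orbit space ℝP⁵/ℤ₂⁴ of the ℤ₂⁴-action on ℝP⁵ given by the composition of the second symmetric power ℤ₂⁴ ⊂ ℤ₂⁶ with the standard ℤ₂⁶-action is homeomorphic to the quotient space (Δ₄,₂ × ℝP²)/≈, where (x, c) ≈ (y, c′) if and only if (x, c) = (y, c′), or x = y and x ∈ ∂Δ₄,₂. -/

import Mathlib

/-- Proportionality of nonzero vectors of `ℝ⁶`: the relation defining `ℝP⁵`. -/
def projRelR (x y : {w : Fin 6 → ℝ // w ≠ 0}) : Prop :=
  ∃ c : ℝ, c ≠ 0 ∧ (fun k => c * x.1 k) = y.1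

/-- `ℝP⁵`, with the quotient topology. -/
abbrev RP5 := Quot projRelR

/-- Proportionality of nonzero vectors of `ℝ³`: the relation defining `ℝP²`. -/
def projRelR2 (x y : {w : Fin 3 → ℝ // w ≠ 0}) : Prop :=
  ∃ c : ℝ, c ≠ 0 ∧ (fun k => c * x.1 k) = y.1

/-- `ℝP²`, with the quotient topology. -/
abbrev RP2 := Quot projRelR2

/-- The weights of the `ℤ₂⁴`-action on `ℝP⁵` given by the composition of the second
symmetric power `ℤ₂⁴ ⊂ ℤ₂⁶` with the standard `ℤ₂⁶`-action:
`ε·[w] = [ε₁ε₂w₀ : ε₁ε₃w₁ : ε₁ε₄w₂ : ε₂ε₃w₃ : ε₂ε₄w₄ : ε₃ε₄w₅]`. -/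
def signCoef (ε : Fin 4 → ℝ) : Fin 6 → ℝ :=
  ![ε 0 * ε 1, ε 0 * ε 2, ε 0 * ε 3, ε 1 * ε 2, ε 1 * ε 3, ε 2 * ε 3]

/-- Two points of `ℝP⁵` lie in the same orbit of the group `ℤ₂⁴ = {−1,1}⁴`. -/
def realOrbitRel (p q : RP5) : Prop :=
  ∃ ε : Fin 4 → ℝ, (∀ i, ε i = 1 ∨ ε i = -1) ∧
    ∃ w w' : {w : Fin 6 → ℝ // w ≠ 0},
      Quot.mk projRelR w = p ∧ Quot.mk projRelR w' = q ∧
      ∀ k : Fin 6, w'.1 k = signCoef ε k * w.1 k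

/-- The hypersimplex (octahedron) `Δ₄,₂ = {x ∈ ℝ⁴ : 0 ≤ xᵢ ≤ 1, Σxᵢ = 2}`. -/
def hypersimplex : Set (Fin 4 → ℝ) :=
  {x | (∀ i, 0 ≤ x i ∧ x i ≤ 1) ∧ x 0 + x 1 + x 2 + x 3 = 2}

/-- The boundary `∂Δ₄,₂`: points of `Δ₄,₂` having some coordinate equal to `0` or `1`. -/
def hypersimplexBoundary : Set (Fin 4 → ℝ) :=
  {x | x ∈ hypersimplex ∧ ∃ i, x i = 0 ∨ x i = 1}

/-- The gluing relation on `Δ₄,₂ × ℝP²`: `(x,c) ≈ (y,c′)` iff `(x,c) = (y,c′)` or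
(`x = y` and `x ∈ ∂Δ₄,₂`). -/
def glueRel (p q : ↥hypersimplex × RP2) : Prop :=
  p = q ∨ (p.1 = q.1 ∧ (p.1 : Fin 4 → ℝ) ∈ hypersimplexBoundary)

namespace Aux17

noncomputable section

def Nv (w : Fin 6 → ℝ) : ℝ := w 0^2 + w 1^2 + w 2^2 + w 3^2 + w 4^2 + w 5^2

def Xv (w : Fin 6 → ℝ) : Fin 4 → ℝ :=
  ![(w 0^2 + w 1^2 + w 2^2)/Nv w, (w 0^2 + w 3^2 + w 4^2)/Nv w,
    (w 1^2 + w 3^2 + w 5^2)/Nv w, (w 2^2 + w 4^2 + w 5^2)/Nv w]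

def Pv (w : Fin 6 → ℝ) : Fin 3 → ℝ := ![w 0 * w 5, w 1 * w 4, w 2 * w 3]

theorem exists_ne' (w : Fin 6 → ℝ) (h : w ≠ 0) : ∃ k, w k ≠ 0 := by
  simpa [Function.ne_iff] using h

theorem Nv_pos {w : Fin 6 → ℝ} (h : w ≠ 0) : 0 < Nv w := by
  rcases lt_or_ge 0 (Nv w) with h' | h'
  · exact h'
  · exfalso; apply h
    have h0 := sq_nonneg (w 0); have h1 := sq_nonneg (w 1); have h2 := sq_nonneg (w 2)
    have h3 := sq_nonneg (w 3); have h4 := sq_nonneg (w 4); have h5 := sq_nonneg (w 5)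
    unfold Nv at h'
    have e : ∀ k : Fin 6, w k ^ 2 = 0 → w k = 0 :=
      fun k hk => pow_eq_zero_iff (n := 2) (by norm_num) |>.mp hk
    have e0 := e 0 (le_antisymm (by linarith) (sq_nonneg _))
    have e1 := e 1 (le_antisymm (by linarith) (sq_nonneg _))
    have e2 := e 2 (le_antisymm (by linarith) (sq_nonneg _))
    have e3 := e 3 (le_antisymm (by linarith) (sq_nonneg _))
    have e4 := e 4 (le_antisymm (by linarith) (sq_nonneg _))
    have e5 := e 5 (le_antisymm (by linarith) (sq_nonneg _))
    funext i
    fin_cases i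
    · exact e0
    · exact e1
    · exact e2
    · exact e3
    · exact e4
    · exact e5

theorem Nv_ne {w : Fin 6 → ℝ} (h : w ≠ 0) : Nv w ≠ 0 := ne_of_gt (Nv_pos h)

theorem coord_bound {n a : ℝ} (hn : 0 < n) (h0 : 0 ≤ a) (h1 : a ≤ n) :
    0 ≤ a / n ∧ a / n ≤ 1 :=
  ⟨div_nonneg h0 hn.le, (div_le_one hn).mpr h1⟩

theorem Xv_mem {w : Fin 6 → ℝ} (h : w ≠ 0) : Xv w ∈ hypersimplex := by
  have hn := Nv_pos h
  have h0 := sq_nonneg (w 0); have h1 := sq_nonneg (w 1); have h2 := sq_nonneg (w 2)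
  have h3 := sq_nonneg (w 3); have h4 := sq_nonneg (w 4); have h5 := sq_nonneg (w 5)
  constructor
  · intro i
    fin_cases i
    · exact coord_bound (a := w 0^2 + w 1^2 + w 2^2) hn (by positivity) (by unfold Nv; linarith)
    · exact coord_bound (a := w 0^2 + w 3^2 + w 4^2) hn (by positivity) (by unfold Nv; linarith)
    · exact coord_bound (a := w 1^2 + w 3^2 + w 5^2) hn (by positivity) (by unfold Nv; linarith)
    · exact coord_bound (a := w 2^2 + w 4^2 + w 5^2) hn (by positivity) (by unfold Nv; linarith)
  · show (w 0^2 + w 1^2 + w 2^2)/Nv w + (w 0^2 + w 3^2 + w 4^2)/Nv w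
      + (w 1^2 + w 3^2 + w 5^2)/Nv w + (w 2^2 + w 4^2 + w 5^2)/Nv w = 2
    rw [← add_div, ← add_div, ← add_div, div_eq_iff (Nv_ne h)]
    unfold Nv; ring

theorem sq3_eq_zero {a b c : ℝ} (h : a^2 + b^2 + c^2 = 0) : a = 0 ∧ b = 0 ∧ c = 0 := by
  refine ⟨?_, ?_, ?_⟩ <;>
    (apply pow_eq_zero_iff (n := 2) (by norm_num) |>.mp;
     nlinarith [sq_nonneg a, sq_nonneg b, sq_nonneg c])

/-- numerator extraction: value 0 -/
theorem num_eq_zero {w : Fin 6 → ℝ} (h : w ≠ 0) {a : ℝ} (hx : a / Nv w = 0) : a = 0 := by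
  rcases div_eq_zero_iff.mp hx with h' | h'
  · exact h'
  · exact absurd h' (Nv_ne h)

theorem num_eq_N {w : Fin 6 → ℝ} (h : w ≠ 0) {a : ℝ} (hx : a / Nv w = 1) : a = Nv w := by
  rwa [div_eq_one_iff_eq (Nv_ne h)] at hx

theorem boundary_Pv_zero {w : Fin 6 → ℝ} (h : w ≠ 0)
    (hb : Xv w ∈ hypersimplexBoundary) : Pv w = 0 := by
  obtain ⟨-, i, hi⟩ := hb
  have key : (w 0 = 0 ∨ w 5 = 0) ∧ (w 1 = 0 ∨ w 4 = 0) ∧ (w 2 = 0 ∨ w 3 = 0) := by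
    fin_cases i <;> rcases hi with hx | hx
    · -- x0 = 0 : w0,w1,w2 = 0
      obtain ⟨e1, e2, e3⟩ := sq3_eq_zero (num_eq_zero h (a := w 0^2 + w 1^2 + w 2^2) hx)
      exact ⟨Or.inl e1, Or.inl e2, Or.inl e3⟩
    · -- x0 = 1 : w3,w4,w5 = 0
      have hnum := num_eq_N h (a := w 0^2 + w 1^2 + w 2^2) hx
      unfold Nv at hnum
      obtain ⟨e1, e2, e3⟩ := sq3_eq_zero (a := w 3) (b := w 4) (c := w 5) (by linarith)
      exact ⟨Or.inr e3, Or.inr e2, Or.inr e1⟩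
    · -- x1 = 0 : w0,w3,w4 = 0
      obtain ⟨e1, e2, e3⟩ := sq3_eq_zero (num_eq_zero h (a := w 0^2 + w 3^2 + w 4^2) hx)
      exact ⟨Or.inl e1, Or.inr e3, Or.inr e2⟩
    · -- x1 = 1 : w1,w2,w5 = 0
      have hnum := num_eq_N h (a := w 0^2 + w 3^2 + w 4^2) hx
      unfold Nv at hnum
      obtain ⟨e1, e2, e3⟩ := sq3_eq_zero (a := w 1) (b := w 2) (c := w 5) (by linarith)
      exact ⟨Or.inr e3, Or.inl e1, Or.inl e2⟩
    · -- x2 = 0 : w1,w3,w5 = 0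
      obtain ⟨e1, e2, e3⟩ := sq3_eq_zero (num_eq_zero h (a := w 1^2 + w 3^2 + w 5^2) hx)
      exact ⟨Or.inr e3, Or.inl e1, Or.inr e2⟩
    · -- x2 = 1 : w0,w2,w4 = 0
      have hnum := num_eq_N h (a := w 1^2 + w 3^2 + w 5^2) hx
      unfold Nv at hnum
      obtain ⟨e1, e2, e3⟩ := sq3_eq_zero (a := w 0) (b := w 2) (c := w 4) (by linarith)
      exact ⟨Or.inl e1, Or.inr e3, Or.inl e2⟩
    · -- x3 = 0 : w2,w4,w5 = 0
      obtain ⟨e1, e2, e3⟩ := sq3_eq_zero (num_eq_zero h (a := w 2^2 + w 4^2 + w 5^2) hx)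
      exact ⟨Or.inr e3, Or.inr e2, Or.inl e1⟩
    · -- x3 = 1 : w0,w1,w3 = 0
      have hnum := num_eq_N h (a := w 2^2 + w 4^2 + w 5^2) hx
      unfold Nv at hnum
      obtain ⟨e1, e2, e3⟩ := sq3_eq_zero (a := w 0) (b := w 1) (c := w 3) (by linarith)
      exact ⟨Or.inl e1, Or.inl e2, Or.inr e3⟩
  obtain ⟨k1, k2, k3⟩ := key
  funext k
  fin_cases k
  · show w 0 * w 5 = 0
    rcases k1 with e | e <;> rw [e] <;> ring
  · show w 1 * w 4 = 0
    rcases k2 with e | e <;> rw [e] <;> ring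
  · show w 2 * w 3 = 0
    rcases k3 with e | e <;> rw [e] <;> ring

theorem Pv_zero_boundary {w : Fin 6 → ℝ} (h : w ≠ 0) (hp : Pv w = 0) :
    Xv w ∈ hypersimplexBoundary := by
  have hn := Nv_ne h
  have p1 : w 0 * w 5 = 0 := congrFun hp 0
  have p2 : w 1 * w 4 = 0 := congrFun hp 1
  have p3 : w 2 * w 3 = 0 := congrFun hp 2
  refine ⟨Xv_mem h, ?_⟩
  have z0 : ∀ a b c : ℝ, a = 0 → b = 0 → c = 0 → (a^2 + b^2 + c^2) / Nv w = 0 := by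
    intro a b c e1 e2 e3; rw [e1, e2, e3]; norm_num
  have o0 : ∀ a : ℝ, a = Nv w → a / Nv w = 1 := fun a e => by rw [e, div_self hn]
  rcases mul_eq_zero.mp p1 with c1 | c1 <;> rcases mul_eq_zero.mp p2 with c2 | c2 <;>
    rcases mul_eq_zero.mp p3 with c3 | c3
  · -- w0 w1 w2 = 0 : x0 = 0
    exact ⟨0, Or.inl (z0 _ _ _ c1 c2 c3)⟩
  · -- w0 w1 w3 = 0 : x3 = 1
    refine ⟨3, Or.inr (o0 _ ?_)⟩; unfold Nv; rw [c1, c2, c3]; ring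
  · -- w0 w4 w2 = 0 : x2 = 1
    refine ⟨2, Or.inr (o0 _ ?_)⟩; unfold Nv; rw [c1, c2, c3]; ring
  · -- w0 w4 w3 = 0 : x1 = 0
    exact ⟨1, Or.inl (z0 _ _ _ c1 c3 c2)⟩
  · -- w5 w1 w2 = 0 : x1 = 1
    refine ⟨1, Or.inr (o0 _ ?_)⟩; unfold Nv; rw [c1, c2, c3]; ring
  · -- w5 w1 w3 = 0 : x2 = 0
    exact ⟨2, Or.inl (z0 _ _ _ c2 c3 c1)⟩
  · -- w5 w4 w2 = 0 : x3 = 0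
    exact ⟨3, Or.inl (z0 _ _ _ c3 c2 c1)⟩
  · -- w5 w4 w3 = 0 : x0 = 1
    refine ⟨0, Or.inr (o0 _ ?_)⟩; unfold Nv; rw [c1, c2, c3]; ring


theorem sq_zero_of {x y : ℝ} (h : x ^ 2 = y ^ 2) (hy : y = 0) : x = 0 := by
  have : x ^ 2 = 0 := by rw [h, hy]; ring
  exact pow_eq_zero_iff (n := 2) (by norm_num) |>.mp this

theorem pair_signs {σ a b a' b' : ℝ} (hσ : σ = 1 ∨ σ = -1)
    (ha : a' ^ 2 = a ^ 2) (hb : b' ^ 2 = b ^ 2) (hp : a' * b' = σ * (a * b)) :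
    ∃ da db : ℝ, (da = 1 ∨ da = -1) ∧ (db = 1 ∨ db = -1) ∧ da * db = σ ∧
      a' = da * a ∧ b' = db * b := by
  have hσ1 : σ * σ = 1 := by rcases hσ with rfl | rfl <;> norm_num
  by_cases haz : a = 0
  · have ha' : a' = 0 := sq_zero_of ha haz
    by_cases hbz : b = 0
    · exact ⟨σ, 1, hσ, Or.inl rfl, by rw [mul_one], by rw [ha', haz, mul_zero],
        by rw [sq_zero_of hb hbz, hbz, mul_zero]⟩
    · have hdb : (b' / b) * (b' / b) = 1 := by
        rw [div_mul_div_comm, ← sq, ← sq, hb, div_self (pow_ne_zero 2 hbz)]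
      refine ⟨σ * (b' / b), b' / b, ?_, mul_self_eq_one_iff.mp hdb, ?_, ?_, ?_⟩
      · rcases hσ with rfl | rfl <;> rcases mul_self_eq_one_iff.mp hdb with e | e <;>
          rw [e] <;> norm_num
      · linear_combination σ * hdb
      · rw [ha', haz, mul_zero]
      · field_simp
  · have ha' : a' ≠ 0 := by
      intro e; exact haz (sq_zero_of ha.symm e)
    by_cases hbz : b = 0
    · have hb' : b' = 0 := sq_zero_of hb hbz
      have hda : (a' / a) * (a' / a) = 1 := by
        rw [div_mul_div_comm, ← sq, ← sq, ha, div_self (pow_ne_zero 2 haz)]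
      refine ⟨a' / a, σ * (a' / a), mul_self_eq_one_iff.mp hda, ?_, ?_, ?_, ?_⟩
      · rcases hσ with rfl | rfl <;> rcases mul_self_eq_one_iff.mp hda with e | e <;>
          rw [e] <;> norm_num
      · linear_combination σ * hda
      · field_simp
      · rw [hb', hbz, mul_zero]
    · have hda : (a' / a) * (a' / a) = 1 := by
        rw [div_mul_div_comm, ← sq, ← sq, ha, div_self (pow_ne_zero 2 haz)]
      have hdb : (b' / b) * (b' / b) = 1 := by
        rw [div_mul_div_comm, ← sq, ← sq, hb, div_self (pow_ne_zero 2 hbz)]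
      refine ⟨a' / a, b' / b, mul_self_eq_one_iff.mp hda, mul_self_eq_one_iff.mp hdb,
        ?_, by field_simp, by field_simp⟩
      field_simp
      linear_combination hp


theorem sign_vec {σ d0 d1 d2 : ℝ} (hσ : σ = 1 ∨ σ = -1) (h0 : d0 = 1 ∨ d0 = -1)
    (h1 : d1 = 1 ∨ d1 = -1) (h2 : d2 = 1 ∨ d2 = -1) :
    ∃ ε : Fin 4 → ℝ, (∀ i, ε i = 1 ∨ ε i = -1) ∧ ∃ c : ℝ, (c = 1 ∨ c = -1) ∧
      c * signCoef ε 0 = d0 ∧ c * signCoef ε 1 = d1 ∧ c * signCoef ε 2 = d2 ∧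
      c * signCoef ε 3 = σ * d2 ∧ c * signCoef ε 4 = σ * d1 ∧ c * signCoef ε 5 = σ * d0 := by
  refine ⟨![1, (σ*d0*d1*d2)*d0, (σ*d0*d1*d2)*d1, (σ*d0*d1*d2)*d2], ?_, σ*d0*d1*d2,
    ?_, ?_, ?_, ?_, ?_, ?_, ?_⟩
  · intro i
    fin_cases i <;> rcases hσ with rfl | rfl <;> rcases h0 with rfl | rfl <;>
      rcases h1 with rfl | rfl <;> rcases h2 with rfl | rfl <;> norm_num
  · rcases hσ with rfl | rfl <;> rcases h0 with rfl | rfl <;>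
      rcases h1 with rfl | rfl <;> rcases h2 with rfl | rfl <;> norm_num
  · show (σ*d0*d1*d2) * ((1:ℝ) * ((σ*d0*d1*d2)*d0)) = d0
    rcases hσ with rfl | rfl <;> rcases h0 with rfl | rfl <;>
      rcases h1 with rfl | rfl <;> rcases h2 with rfl | rfl <;> norm_num
  · show (σ*d0*d1*d2) * ((1:ℝ) * ((σ*d0*d1*d2)*d1)) = d1
    rcases hσ with rfl | rfl <;> rcases h0 with rfl | rfl <;>
      rcases h1 with rfl | rfl <;> rcases h2 with rfl | rfl <;> norm_num
  · show (σ*d0*d1*d2) * ((1:ℝ) * ((σ*d0*d1*d2)*d2)) = d2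
    rcases hσ with rfl | rfl <;> rcases h0 with rfl | rfl <;>
      rcases h1 with rfl | rfl <;> rcases h2 with rfl | rfl <;> norm_num
  · show (σ*d0*d1*d2) * (((σ*d0*d1*d2)*d0) * ((σ*d0*d1*d2)*d1)) = σ * d2
    rcases hσ with rfl | rfl <;> rcases h0 with rfl | rfl <;>
      rcases h1 with rfl | rfl <;> rcases h2 with rfl | rfl <;> norm_num
  · show (σ*d0*d1*d2) * (((σ*d0*d1*d2)*d0) * ((σ*d0*d1*d2)*d2)) = σ * d1
    rcases hσ with rfl | rfl <;> rcases h0 with rfl | rfl <;>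
      rcases h1 with rfl | rfl <;> rcases h2 with rfl | rfl <;> norm_num
  · show (σ*d0*d1*d2) * (((σ*d0*d1*d2)*d1) * ((σ*d0*d1*d2)*d2)) = σ * d0
    rcases hσ with rfl | rfl <;> rcases h0 with rfl | rfl <;>
      rcases h1 with rfl | rfl <;> rcases h2 with rfl | rfl <;> norm_num

theorem sign_lemma {v v' : Fin 6 → ℝ} {σ : ℝ} (hσ : σ = 1 ∨ σ = -1)
    (hsq : ∀ k, v' k ^ 2 = v k ^ 2)
    (hp0 : v' 0 * v' 5 = σ * (v 0 * v 5))
    (hp1 : v' 1 * v' 4 = σ * (v 1 * v 4))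
    (hp2 : v' 2 * v' 3 = σ * (v 2 * v 3)) :
    ∃ ε : Fin 4 → ℝ, (∀ i, ε i = 1 ∨ ε i = -1) ∧ ∃ c : ℝ, (c = 1 ∨ c = -1) ∧
      ∀ k, v' k = c * (signCoef ε k * v k) := by
  obtain ⟨d0, d5, h0, h5, h05, e0, e5⟩ := pair_signs hσ (hsq 0) (hsq 5) hp0
  obtain ⟨d1, d4, h1, h4, h14, e1, e4⟩ := pair_signs hσ (hsq 1) (hsq 4) hp1
  obtain ⟨d2, d3, h2, h3, h23, e2, e3⟩ := pair_signs hσ (hsq 2) (hsq 3) hp2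
  have hd5 : d5 = σ * d0 := by
    rcases h0 with rfl | rfl <;> rcases hσ with rfl | rfl <;> linarith [h05]
  have hd4 : d4 = σ * d1 := by
    rcases h1 with rfl | rfl <;> rcases hσ with rfl | rfl <;> linarith [h14]
  have hd3 : d3 = σ * d2 := by
    rcases h2 with rfl | rfl <;> rcases hσ with rfl | rfl <;> linarith [h23]
  obtain ⟨ε, hε, c, hc, u0, u1, u2, u3, u4, u5⟩ := sign_vec hσ h0 h1 h2
  refine ⟨ε, hε, c, hc, ?_⟩
  intro k
  fin_cases k
  · show v' 0 = c * (signCoef ε 0 * v 0); rw [e0, ← u0]; ring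
  · show v' 1 = c * (signCoef ε 1 * v 1); rw [e1, ← u1]; ring
  · show v' 2 = c * (signCoef ε 2 * v 2); rw [e2, ← u2]; ring
  · show v' 3 = c * (signCoef ε 3 * v 3); rw [e3, hd3, ← u3]; ring
  · show v' 4 = c * (signCoef ε 4 * v 4); rw [e4, hd4, ← u4]; ring
  · show v' 5 = c * (signCoef ε 5 * v 5); rw [e5, hd5, ← u5]; ring

theorem le_of_sq_le {x y : ℝ} (hy : 0 ≤ y) (h : x^2 ≤ y^2) : x ≤ y :=
  (abs_le_of_sq_le_sq' h hy).2

theorem eq_of_sq_eq {x y : ℝ} (hx : 0 ≤ x) (hy : 0 ≤ y) (h : x^2 = y^2) : x = y :=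
  le_antisymm (le_of_sq_le hy h.le) (le_of_sq_le hx h.ge)

theorem lt_of_sq_lt {x y : ℝ} (hy : 0 ≤ y) (h : x^2 < y^2) : x < y := by
  rcases lt_or_ge x y with h' | h'
  · exact h'
  · exfalso; nlinarith

set_option maxHeartbeats 800000 in
theorem sums_eq {s1 s2 s3 s1' s2' s3' d1 d2 d3 q1 q2 q3 μ : ℝ}
    (h1 : 0 ≤ s1) (h2 : 0 ≤ s2) (h3 : 0 ≤ s3)
    (h1' : 0 ≤ s1') (h2' : 0 ≤ s2') (h3' : 0 ≤ s3')
    (e1 : s1^2 = d1^2 + 4*q1^2) (e2 : s2^2 = d2^2 + 4*q2^2) (e3 : s3^2 = d3^2 + 4*q3^2)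
    (e1' : s1'^2 = d1^2 + 4*(μ*q1)^2) (e2' : s2'^2 = d2^2 + 4*(μ*q2)^2)
    (e3' : s3'^2 = d3^2 + 4*(μ*q3)^2)
    (hsum : s1 + s2 + s3 = s1' + s2' + s3') :
    (s1 = s1' ∧ s2 = s2' ∧ s3 = s3') ∧ (μ*μ = 1 ∨ (q1 = 0 ∧ q2 = 0 ∧ q3 = 0)) := by
  have key : μ*μ = 1 ∨ (q1 = 0 ∧ q2 = 0 ∧ q3 = 0) := by
    by_contra hcon
    push_neg at hcon
    obtain ⟨hμ, hq⟩ := hcon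
    have hqne : q1 ≠ 0 ∨ q2 ≠ 0 ∨ q3 ≠ 0 := by tauto
    rcases lt_trichotomy (μ*μ) 1 with hlt | heq | hgt
    · have le1 : s1' ≤ s1 := le_of_sq_le h1 (by nlinarith [sq_nonneg q1])
      have le2 : s2' ≤ s2 := le_of_sq_le h2 (by nlinarith [sq_nonneg q2])
      have le3 : s3' ≤ s3 := le_of_sq_le h3 (by nlinarith [sq_nonneg q3])
      rcases hqne with hne | hne | hne
      · have : s1' < s1 := lt_of_sq_lt h1 (by nlinarith [pow_two_pos_of_ne_zero hne])
        linarith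
      · have : s2' < s2 := lt_of_sq_lt h2 (by nlinarith [pow_two_pos_of_ne_zero hne])
        linarith
      · have : s3' < s3 := lt_of_sq_lt h3 (by nlinarith [pow_two_pos_of_ne_zero hne])
        linarith
    · exact hμ heq
    · have le1 : s1 ≤ s1' := le_of_sq_le h1' (by nlinarith [sq_nonneg q1])
      have le2 : s2 ≤ s2' := le_of_sq_le h2' (by nlinarith [sq_nonneg q2])
      have le3 : s3 ≤ s3' := le_of_sq_le h3' (by nlinarith [sq_nonneg q3])
      rcases hqne with hne | hne | hne
      · have : s1 < s1' := lt_of_sq_lt h1' (by nlinarith [pow_two_pos_of_ne_zero hne])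
        linarith
      · have : s2 < s2' := lt_of_sq_lt h2' (by nlinarith [pow_two_pos_of_ne_zero hne])
        linarith
      · have : s3 < s3' := lt_of_sq_lt h3' (by nlinarith [pow_two_pos_of_ne_zero hne])
        linarith
  refine ⟨?_, key⟩
  have k1 : s1^2 = s1'^2 := by
    rcases key with hμ | ⟨z1, z2, z3⟩
    · linear_combination e1 - e1' - (4*q1^2) * hμ
    · rw [z1] at e1 e1'; linear_combination e1 - e1'
  have k2 : s2^2 = s2'^2 := by
    rcases key with hμ | ⟨z1, z2, z3⟩
    · linear_combination e2 - e2' - (4*q2^2) * hμ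
    · rw [z2] at e2 e2'; linear_combination e2 - e2'
  have k3 : s3^2 = s3'^2 := by
    rcases key with hμ | ⟨z1, z2, z3⟩
    · linear_combination e3 - e3' - (4*q3^2) * hμ
    · rw [z3] at e3 e3'; linear_combination e3 - e3'
  exact ⟨eq_of_sq_eq h1 h1' k1, eq_of_sq_eq h2 h2' k2, eq_of_sq_eq h3 h3' k3⟩

theorem pair_det {p q p' q' : ℝ}
    (hd : p - q = p' - q') (hs : p + q = p' + q') : p = p' ∧ q = q' :=
  ⟨by linarith, by linarith⟩

theorem coef_sq {ε : Fin 4 → ℝ} (hε : ∀ i, ε i = 1 ∨ ε i = -1) :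
    ∀ k, signCoef ε k ^ 2 = 1 := by
  have q : ∀ i, ε i ^ 2 = 1 := fun i => by rcases hε i with e | e <;> rw [e] <;> norm_num
  intro k
  fin_cases k
  · show (ε 0 * ε 1) ^ 2 = 1; rw [mul_pow, q 0, q 1]; norm_num
  · show (ε 0 * ε 2) ^ 2 = 1; rw [mul_pow, q 0, q 2]; norm_num
  · show (ε 0 * ε 3) ^ 2 = 1; rw [mul_pow, q 0, q 3]; norm_num
  · show (ε 1 * ε 2) ^ 2 = 1; rw [mul_pow, q 1, q 2]; norm_num
  · show (ε 1 * ε 3) ^ 2 = 1; rw [mul_pow, q 1, q 3]; norm_num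
  · show (ε 2 * ε 3) ^ 2 = 1; rw [mul_pow, q 2, q 3]; norm_num

theorem sq_of_coef {w w' : Fin 6 → ℝ} {c : ℝ} {ε : Fin 4 → ℝ}
    (hε : ∀ i, ε i = 1 ∨ ε i = -1) (h : ∀ k, w' k = c * (signCoef ε k * w k)) :
    ∀ k, w' k ^ 2 = c ^ 2 * w k ^ 2 := fun k => by
  rw [h k, mul_pow, mul_pow, coef_sq hε k]; ring

theorem Nv_of_sq {w w' : Fin 6 → ℝ} {c : ℝ} (hsq : ∀ k, w' k ^ 2 = c ^ 2 * w k ^ 2) :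
    Nv w' = c ^ 2 * Nv w := by
  unfold Nv; rw [hsq 0, hsq 1, hsq 2, hsq 3, hsq 4, hsq 5]; ring

theorem Xv_of_sq {w w' : Fin 6 → ℝ} {c : ℝ} (hc : c ≠ 0)
    (hsq : ∀ k, w' k ^ 2 = c ^ 2 * w k ^ 2) : Xv w' = Xv w := by
  have hN := Nv_of_sq hsq
  have hc2 : c ^ 2 ≠ 0 := pow_ne_zero _ hc
  funext i
  fin_cases i
  · show (w' 0^2 + w' 1^2 + w' 2^2) / Nv w' = (w 0^2 + w 1^2 + w 2^2) / Nv w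
    rw [hsq 0, hsq 1, hsq 2, hN, ← mul_add, ← mul_add, mul_div_mul_left _ _ hc2]
  · show (w' 0^2 + w' 3^2 + w' 4^2) / Nv w' = (w 0^2 + w 3^2 + w 4^2) / Nv w
    rw [hsq 0, hsq 3, hsq 4, hN, ← mul_add, ← mul_add, mul_div_mul_left _ _ hc2]
  · show (w' 1^2 + w' 3^2 + w' 5^2) / Nv w' = (w 1^2 + w 3^2 + w 5^2) / Nv w
    rw [hsq 1, hsq 3, hsq 5, hN, ← mul_add, ← mul_add, mul_div_mul_left _ _ hc2]
  · show (w' 2^2 + w' 4^2 + w' 5^2) / Nv w' = (w 2^2 + w 4^2 + w 5^2) / Nv w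
    rw [hsq 2, hsq 4, hsq 5, hN, ← mul_add, ← mul_add, mul_div_mul_left _ _ hc2]

theorem Pv_smul {a b : Fin 6 → ℝ} {c : ℝ} (e : ∀ k, b k = c * a k) :
    ∀ i, Pv b i = c ^ 2 * Pv a i := by
  intro i
  fin_cases i
  · show b 0 * b 5 = c ^ 2 * (a 0 * a 5); rw [e 0, e 5]; ring
  · show b 1 * b 4 = c ^ 2 * (a 1 * a 4); rw [e 1, e 4]; ring
  · show b 2 * b 3 = c ^ 2 * (a 2 * a 3); rw [e 2, e 3]; ring

theorem Pv_coef {a b : Fin 6 → ℝ} {c : ℝ} {ε : Fin 4 → ℝ}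
    (h : ∀ k, b k = c * (signCoef ε k * a k)) :
    ∀ i, Pv b i = (c ^ 2 * (ε 0 * ε 1 * ε 2 * ε 3)) * Pv a i := by
  have h0 : b 0 = c * ((ε 0 * ε 1) * a 0) := h 0
  have h1 : b 1 = c * ((ε 0 * ε 2) * a 1) := h 1
  have h2 : b 2 = c * ((ε 0 * ε 3) * a 2) := h 2
  have h3 : b 3 = c * ((ε 1 * ε 2) * a 3) := h 3
  have h4 : b 4 = c * ((ε 1 * ε 3) * a 4) := h 4
  have h5 : b 5 = c * ((ε 2 * ε 3) * a 5) := h 5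
  intro i
  fin_cases i
  · show b 0 * b 5 = _ * (a 0 * a 5); rw [h0, h5]; ring
  · show b 1 * b 4 = _ * (a 1 * a 4); rw [h1, h4]; ring
  · show b 2 * b 3 = _ * (a 2 * a 3); rw [h2, h3]; ring

theorem eps_prod_ne {ε : Fin 4 → ℝ} (hε : ∀ i, ε i = 1 ∨ ε i = -1) :
    ε 0 * ε 1 * ε 2 * ε 3 ≠ 0 := by
  rcases hε 0 with e0 | e0 <;> rcases hε 1 with e1 | e1 <;> rcases hε 2 with e2 | e2 <;>
    rcases hε 3 with e3 | e3 <;> rw [e0, e1, e2, e3] <;> norm_num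

theorem orbit_mk (a b : {w : Fin 6 → ℝ // w ≠ 0}) {ε : Fin 4 → ℝ} {c : ℝ}
    (hε : ∀ i, ε i = 1 ∨ ε i = -1) (hc : c ≠ 0)
    (h : ∀ k, b.1 k = c * (signCoef ε k * a.1 k)) :
    realOrbitRel (Quot.mk projRelR a) (Quot.mk projRelR b) := by
  have hcoefne : ∀ k, signCoef ε k ≠ 0 := by
    intro k e
    have := coef_sq hε k
    rw [e] at this; norm_num at this
  have hne : (fun k => signCoef ε k * a.1 k) ≠ 0 := by
    intro e
    apply a.2
    funext k
    have e' : signCoef ε k * a.1 k = 0 := congrFun e k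
    exact ((mul_eq_zero.mp e').resolve_left (hcoefne k))
  refine ⟨ε, hε, a, ⟨fun k => signCoef ε k * a.1 k, hne⟩, rfl, ?_, fun k => rfl⟩
  apply Quot.sound
  exact ⟨c, hc, funext fun k => by simp only []; rw [← h k]⟩

theorem div_div_transfer {n n' x y : ℝ} (hn : n ≠ 0) (hn' : n' ≠ 0)
    (h : x / n = y / n') : y = (n' / n) * x := by
  field_simp at h ⊢
  linear_combination -h

/-- The main injectivity lemma at the vector level. -/
theorem key_inj {w w' : Fin 6 → ℝ} (hw : w ≠ 0) (hw' : w' ≠ 0)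
    (hx : Xv w = Xv w') {l : ℝ} (hl : ∀ i, Pv w' i = l * Pv w i) :
    ∃ ε : Fin 4 → ℝ, (∀ i, ε i = 1 ∨ ε i = -1) ∧ ∃ c : ℝ, c ≠ 0 ∧
      ∀ k, w' k = c * (signCoef ε k * w k) := by
  have hn := Nv_pos hw
  have hn' := Nv_pos hw'
  have hnne := Nv_ne hw
  have hnne' := Nv_ne hw'
  have hx0 : (w 0^2 + w 1^2 + w 2^2)/Nv w = (w' 0^2 + w' 1^2 + w' 2^2)/Nv w' := congrFun hx 0
  have hx1 : (w 0^2 + w 3^2 + w 4^2)/Nv w = (w' 0^2 + w' 3^2 + w' 4^2)/Nv w' := congrFun hx 1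
  have hx2 : (w 1^2 + w 3^2 + w 5^2)/Nv w = (w' 1^2 + w' 3^2 + w' 5^2)/Nv w' := congrFun hx 2
  have hx3 : (w 2^2 + w 4^2 + w 5^2)/Nv w = (w' 2^2 + w' 4^2 + w' 5^2)/Nv w' := congrFun hx 3
  -- the d-differences agree
  have u1 : ∀ v : Fin 6 → ℝ, Nv v ≠ 0 → (v 0^2 - v 5^2)/Nv v
      = (v 0^2+v 1^2+v 2^2)/Nv v + (v 0^2+v 3^2+v 4^2)/Nv v - 1 := by
    intro v hv; field_simp; unfold Nv; ring
  have u2 : ∀ v : Fin 6 → ℝ, Nv v ≠ 0 → (v 1^2 - v 4^2)/Nv v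
      = (v 0^2+v 1^2+v 2^2)/Nv v + (v 1^2+v 3^2+v 5^2)/Nv v - 1 := by
    intro v hv; field_simp; unfold Nv; ring
  have u3 : ∀ v : Fin 6 → ℝ, Nv v ≠ 0 → (v 2^2 - v 3^2)/Nv v
      = (v 0^2+v 1^2+v 2^2)/Nv v + (v 2^2+v 4^2+v 5^2)/Nv v - 1 := by
    intro v hv; field_simp; unfold Nv; ring
  have hd1 : (w 0^2 - w 5^2)/Nv w = (w' 0^2 - w' 5^2)/Nv w' := by
    rw [u1 w hnne, u1 w' hnne', hx0, hx1]
  have hd2 : (w 1^2 - w 4^2)/Nv w = (w' 1^2 - w' 4^2)/Nv w' := by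
    rw [u2 w hnne, u2 w' hnne', hx0, hx2]
  have hd3 : (w 2^2 - w 3^2)/Nv w = (w' 2^2 - w' 3^2)/Nv w' := by
    rw [u3 w hnne, u3 w' hnne', hx0, hx3]
  -- scaled products
  set μ : ℝ := l * Nv w / Nv w' with hμdef
  have hq1 : w' 0 * w' 5 / Nv w' = μ * (w 0 * w 5 / Nv w) := by
    have e : w' 0 * w' 5 = l * (w 0 * w 5) := hl 0
    rw [e, hμdef]; field_simp
  have hq2 : w' 1 * w' 4 / Nv w' = μ * (w 1 * w 4 / Nv w) := by
    have e : w' 1 * w' 4 = l * (w 1 * w 4) := hl 1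
    rw [e, hμdef]; field_simp
  have hq3 : w' 2 * w' 3 / Nv w' = μ * (w 2 * w 3 / Nv w) := by
    have e : w' 2 * w' 3 = l * (w 2 * w 3) := hl 2
    rw [e, hμdef]; field_simp
  -- apply sums_eq
  have e1 : ((w 0^2 + w 5^2)/Nv w)^2 = ((w 0^2 - w 5^2)/Nv w)^2 + 4*(w 0 * w 5/Nv w)^2 := by
    field_simp; ring
  have e2 : ((w 1^2 + w 4^2)/Nv w)^2 = ((w 1^2 - w 4^2)/Nv w)^2 + 4*(w 1 * w 4/Nv w)^2 := by
    field_simp; ring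
  have e3 : ((w 2^2 + w 3^2)/Nv w)^2 = ((w 2^2 - w 3^2)/Nv w)^2 + 4*(w 2 * w 3/Nv w)^2 := by
    field_simp; ring
  have e1' : ((w' 0^2 + w' 5^2)/Nv w')^2
      = ((w 0^2 - w 5^2)/Nv w)^2 + 4*(μ * (w 0 * w 5/Nv w))^2 := by
    rw [hd1, ← hq1]; field_simp; ring
  have e2' : ((w' 1^2 + w' 4^2)/Nv w')^2
      = ((w 1^2 - w 4^2)/Nv w)^2 + 4*(μ * (w 1 * w 4/Nv w))^2 := by
    rw [hd2, ← hq2]; field_simp; ring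
  have e3' : ((w' 2^2 + w' 3^2)/Nv w')^2
      = ((w 2^2 - w 3^2)/Nv w)^2 + 4*(μ * (w 2 * w 3/Nv w))^2 := by
    rw [hd3, ← hq3]; field_simp; ring
  have hs_nonneg : ∀ (v : Fin 6 → ℝ) (a b : Fin 6), Nv v ≠ 0 → 0 < Nv v →
      0 ≤ (v a^2 + v b^2)/Nv v := by
    intro v a b _ hpos
    apply div_nonneg _ hpos.le
    positivity
  have hsum : (w 0^2 + w 5^2)/Nv w + (w 1^2 + w 4^2)/Nv w + (w 2^2 + w 3^2)/Nv w
      = (w' 0^2 + w' 5^2)/Nv w' + (w' 1^2 + w' 4^2)/Nv w' + (w' 2^2 + w' 3^2)/Nv w' := by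
    have hv1 : (w 0^2 + w 5^2)/Nv w + (w 1^2 + w 4^2)/Nv w + (w 2^2 + w 3^2)/Nv w = 1 := by
      field_simp; unfold Nv; ring
    have hv2 : (w' 0^2 + w' 5^2)/Nv w' + (w' 1^2 + w' 4^2)/Nv w'
        + (w' 2^2 + w' 3^2)/Nv w' = 1 := by
      field_simp; unfold Nv; ring
    rw [hv1, hv2]
  obtain ⟨⟨es1, es2, es3⟩, hkey⟩ :=
    sums_eq (hs_nonneg w 0 5 hnne hn) (hs_nonneg w 1 4 hnne hn) (hs_nonneg w 2 3 hnne hn)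
      (hs_nonneg w' 0 5 hnne' hn') (hs_nonneg w' 1 4 hnne' hn') (hs_nonneg w' 2 3 hnne' hn')
      e1 e2 e3 e1' e2' e3' hsum
  -- coordinatewise squares transfer
  have t0 : w 0^2/Nv w = w' 0^2/Nv w' ∧ w 5^2/Nv w = w' 5^2/Nv w' := by
    apply pair_det
    · rw [div_sub_div_same, div_sub_div_same]; exact hd1
    · rw [← add_div, ← add_div]; exact es1
  have t1 : w 1^2/Nv w = w' 1^2/Nv w' ∧ w 4^2/Nv w = w' 4^2/Nv w' := by
    apply pair_det
    · rw [div_sub_div_same, div_sub_div_same]; exact hd2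
    · rw [← add_div, ← add_div]; exact es2
  have t2 : w 2^2/Nv w = w' 2^2/Nv w' ∧ w 3^2/Nv w = w' 3^2/Nv w' := by
    apply pair_det
    · rw [div_sub_div_same, div_sub_div_same]; exact hd3
    · rw [← add_div, ← add_div]; exact es3
  have hsqq : ∀ k, w' k ^ 2 = (Nv w' / Nv w) * w k ^ 2 := by
    intro k
    fin_cases k
    · exact div_div_transfer hnne hnne' t0.1
    · exact div_div_transfer hnne hnne' t1.1
    · exact div_div_transfer hnne hnne' t2.1
    · exact div_div_transfer hnne hnne' t2.2
    · exact div_div_transfer hnne hnne' t1.2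
    · exact div_div_transfer hnne hnne' t0.2
  -- sign of the products
  obtain ⟨σ, hσpm, hP0, hP1, hP2⟩ : ∃ σ : ℝ, (σ = 1 ∨ σ = -1) ∧
      w' 0 * w' 5 / Nv w' = σ * (w 0 * w 5 / Nv w) ∧
      w' 1 * w' 4 / Nv w' = σ * (w 1 * w 4 / Nv w) ∧
      w' 2 * w' 3 / Nv w' = σ * (w 2 * w 3 / Nv w) := by
    rcases hkey with hμ | ⟨z1, z2, z3⟩
    · exact ⟨μ, mul_self_eq_one_iff.mp hμ, hq1, hq2, hq3⟩
    · refine ⟨1, Or.inl rfl, ?_, ?_, ?_⟩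
      · rw [hq1, z1]; ring
      · rw [hq2, z2]; ring
      · rw [hq3, z3]; ring
  -- build the scaled comparison vector and apply the sign lemma
  set r : ℝ := Real.sqrt (Nv w / Nv w') with hrdef
  have hrpos : 0 < r := Real.sqrt_pos.mpr (div_pos hn hn')
  have hr2 : r ^ 2 = Nv w / Nv w' := Real.sq_sqrt (div_pos hn hn').le
  set v' : Fin 6 → ℝ := fun k => r * w' k with hv'def
  have hsql : ∀ k, v' k ^ 2 = w k ^ 2 := by
    intro k
    show (r * w' k) ^ 2 = w k ^ 2
    rw [mul_pow, hr2, hsqq k]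
    field_simp
  have hprod : ∀ a b : Fin 6, w' a * w' b / Nv w' = σ * (w a * w b / Nv w) →
      v' a * v' b = σ * (w a * w b) := by
    intro a b hab
    show r * w' a * (r * w' b) = σ * (w a * w b)
    have : r * w' a * (r * w' b) = r ^ 2 * (w' a * w' b) := by ring
    rw [this, hr2]
    field_simp at hab ⊢
    linear_combination hab
  obtain ⟨ε, hε, c, hcpm, hv⟩ :=
    sign_lemma hσpm hsql (hprod 0 5 hP0) (hprod 1 4 hP1) (hprod 2 3 hP2)
  have hcne : c ≠ 0 := by rcases hcpm with rfl | rfl <;> norm_num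
  refine ⟨ε, hε, c / r, div_ne_zero hcne (ne_of_gt hrpos), ?_⟩
  intro k
  have := hv k
  rw [hv'def] at this
  simp only [] at this
  rw [div_mul_eq_mul_div, eq_div_iff (ne_of_gt hrpos)]
  linear_combination this

/-! ### Equivalence properties of the relations -/

theorem projRelR2_equivalence : Equivalence projRelR2 := by
  constructor
  · intro x; exact ⟨1, one_ne_zero, by simp⟩
  · rintro x y ⟨c, hc, h⟩
    refine ⟨c⁻¹, inv_ne_zero hc, funext fun k => ?_⟩
    have := congrFun h k
    rw [← this]
    field_simp
  · rintro x y z ⟨c, hc, h⟩ ⟨c', hc', h'⟩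
    refine ⟨c' * c, mul_ne_zero hc' hc, funext fun k => ?_⟩
    have h1 := congrFun h k
    have h2 := congrFun h' k
    rw [← h2, ← h1]
    ring

theorem glueRel_equivalence : Equivalence glueRel := by
  constructor
  · intro p; exact Or.inl rfl
  · rintro p q (rfl | ⟨e, hb⟩)
    · exact Or.inl rfl
    · exact Or.inr ⟨e.symm, e ▸ hb⟩
  · rintro p q s (rfl | ⟨e, hb⟩) h2
    · exact h2
    · rcases h2 with rfl | ⟨e', hb'⟩
      · exact Or.inr ⟨e, hb⟩
      · exact Or.inr ⟨e.trans e', hb⟩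

theorem glue_eq_iff {p q : ↥hypersimplex × RP2} :
    Quot.mk glueRel p = Quot.mk glueRel q ↔ glueRel p q := by
  rw [Quot.eq]
  exact glueRel_equivalence.eqvGen_iff

theorem rp2_eq_iff {v v' : {v : Fin 3 → ℝ // v ≠ 0}} :
    Quot.mk projRelR2 v = Quot.mk projRelR2 v' ↔ projRelR2 v v' := by
  rw [Quot.eq]
  exact projRelR2_equivalence.eqvGen_iff

/-! ### The map to the glued product -/

def junkv : Fin 3 → ℝ := ![1, 0, 0]

theorem junkv_ne : junkv ≠ 0 := by
  intro e
  have := congrFun e 0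
  simp [junkv] at this

/-- `Pv` modified to avoid the zero vector. -/
def pvn (w : Fin 6 → ℝ) : Fin 3 → ℝ := if Pv w = 0 then junkv else Pv w

theorem pvn_ne (w : Fin 6 → ℝ) : pvn w ≠ 0 := by
  unfold pvn
  split
  · exact junkv_ne
  · assumption

def rho (w : Fin 6 → ℝ) : RP2 := Quot.mk projRelR2 ⟨pvn w, pvn_ne w⟩

def Fmap (a : {w : Fin 6 → ℝ // w ≠ 0}) : ↥hypersimplex × RP2 :=
  (⟨Xv a.1, Xv_mem a.2⟩, rho a.1)

def FQ (a : {w : Fin 6 → ℝ // w ≠ 0}) : Quot glueRel := Quot.mk glueRel (Fmap a)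

theorem rho_eq_of {w w' : Fin 6 → ℝ} {m : ℝ} (hm : m ≠ 0)
    (hP : ∀ i, Pv w' i = m * Pv w i) : rho w = rho w' := by
  by_cases hz : Pv w = 0
  · have hz' : Pv w' = 0 := by
      funext i
      rw [hP i, congrFun hz i]
      simp
    have e : (⟨pvn w, pvn_ne w⟩ : {v : Fin 3 → ℝ // v ≠ 0}) = ⟨pvn w', pvn_ne w'⟩ :=
      Subtype.ext (by simp [pvn, hz, hz'])
    unfold rho
    rw [e]
  · have hz' : Pv w' ≠ 0 := by
      intro e
      apply hz
      funext i
      have := congrFun e i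
      rw [hP i] at this
      simpa [hm] using this
    apply Quot.sound
    refine ⟨m, hm, funext fun i => ?_⟩
    show m * (pvn w) i = (pvn w') i
    unfold pvn
    rw [if_neg hz, if_neg hz']
    exact (hP i).symm

theorem FQ_eq_of {a b : {w : Fin 6 → ℝ // w ≠ 0}} {m : ℝ} (hm : m ≠ 0)
    (hX : Xv b.1 = Xv a.1) (hP : ∀ i, Pv b.1 i = m * Pv a.1 i) : FQ a = FQ b := by
  unfold FQ Fmap
  congr 1
  refine Prod.ext ?_ ?_
  · exact Subtype.ext hX.symm
  · exact rho_eq_of hm hP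

theorem FQ_wd1 (a b : {w : Fin 6 → ℝ // w ≠ 0}) (h : projRelR a b) : FQ a = FQ b := by
  obtain ⟨c, hc, he⟩ := h
  have e : ∀ k, b.1 k = c * a.1 k := fun k => (congrFun he k).symm
  exact FQ_eq_of (pow_ne_zero 2 hc)
    (Xv_of_sq hc (fun k => by rw [e k]; ring)) (Pv_smul e)

def FQ5 : RP5 → Quot glueRel := Quot.lift FQ FQ_wd1

theorem FQ_wd2 (p q : RP5) (h : realOrbitRel p q) : FQ5 p = FQ5 q := by
  obtain ⟨ε, hε, a, b, ha, hb, hcoef⟩ := h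
  rw [← ha, ← hb]
  show FQ a = FQ b
  have h' : ∀ k, b.1 k = 1 * (signCoef ε k * a.1 k) := fun k => by rw [hcoef k]; ring
  have hP := Pv_coef h'
  have hm : (1:ℝ)^2 * (ε 0 * ε 1 * ε 2 * ε 3) ≠ 0 := by
    simpa using eps_prod_ne hε
  exact FQ_eq_of hm (Xv_of_sq one_ne_zero (sq_of_coef hε h')) hP

def Phi : Quot realOrbitRel → Quot glueRel := Quot.lift FQ5 FQ_wd2

/-! ### Injectivity -/

theorem Phi_inj : Function.Injective Phi := by
  intro z1 z2 h
  obtain ⟨p, rfl⟩ := Quot.exists_rep z1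
  obtain ⟨a, rfl⟩ := Quot.exists_rep p
  obtain ⟨q, rfl⟩ := Quot.exists_rep z2
  obtain ⟨b, rfl⟩ := Quot.exists_rep q
  have hglue : glueRel (Fmap a) (Fmap b) := glue_eq_iff.mp h
  apply Quot.sound
  -- reduce to key_inj
  have main : Xv a.1 = Xv b.1 → (∃ l : ℝ, ∀ i, Pv b.1 i = l * Pv a.1 i) →
      realOrbitRel (Quot.mk projRelR a) (Quot.mk projRelR b) := by
    intro hX ⟨l, hl⟩
    obtain ⟨ε, hε, c, hc, hco⟩ := key_inj a.2 b.2 hX hl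
    exact orbit_mk a b hε hc hco
  rcases hglue with heq | ⟨he, hbd⟩
  · have hX : Xv a.1 = Xv b.1 := congrArg (fun p => (Prod.fst p).1) heq
    have hrho : rho a.1 = rho b.1 := congrArg Prod.snd heq
    by_cases hPa : Pv a.1 = 0
    · have hba : Xv b.1 ∈ hypersimplexBoundary := hX ▸ Pv_zero_boundary a.2 hPa
      have hPb : Pv b.1 = 0 := boundary_Pv_zero b.2 hba
      exact main hX ⟨1, fun i => by rw [congrFun hPa i, congrFun hPb i]; simp⟩
    · have hPb : Pv b.1 ≠ 0 := by
        intro hPb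
        apply hPa
        have hba : Xv a.1 ∈ hypersimplexBoundary := hX ▸ Pv_zero_boundary b.2 hPb
        exact boundary_Pv_zero a.2 hba
      have hrel : projRelR2 ⟨pvn a.1, pvn_ne a.1⟩ ⟨pvn b.1, pvn_ne b.1⟩ := rp2_eq_iff.mp hrho
      obtain ⟨c, hc, he⟩ := hrel
      refine main hX ⟨c, fun i => ?_⟩
      have := congrFun he i
      simp only [] at this
      unfold pvn at this
      rw [if_neg hPa, if_neg hPb] at this
      exact this.symm
  · have hX : Xv a.1 = Xv b.1 := congrArg Subtype.val he
    have hbda : Xv a.1 ∈ hypersimplexBoundary := hbd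
    have hPa : Pv a.1 = 0 := boundary_Pv_zero a.2 hbda
    have hPb : Pv b.1 = 0 := boundary_Pv_zero b.2 (hX ▸ hbda)
    exact main hX ⟨1, fun i => by rw [congrFun hPa i, congrFun hPb i]; simp⟩

/-! ### Surjectivity -/

theorem build_pair (d q : ℝ) :
    ∃ a b : ℝ, a^2 + b^2 = Real.sqrt (d^2 + 4*q^2) ∧ a^2 - b^2 = d ∧ a * b = q := by
  set s := Real.sqrt (d^2 + 4*q^2) with hs
  have hs0 : 0 ≤ s := Real.sqrt_nonneg _
  have hss : s^2 = d^2 + 4*q^2 := Real.sq_sqrt (by positivity)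
  have hsd : |d| ≤ s := le_of_sq_le hs0 (by rw [sq_abs]; nlinarith [sq_nonneg q])
  obtain ⟨hdl, hdr⟩ := abs_le.mp hsd
  have hta : 0 ≤ (s + d)/2 := by linarith
  have htb : 0 ≤ (s - d)/2 := by linarith
  have hprod : ((s + d)/2) * ((s - d)/2) = q^2 := by linear_combination hss / 4
  by_cases hz : (s + d)/2 = 0
  · have hq : q = 0 := by
      have hq2 : q^2 = 0 := by rw [← hprod, hz]; ring
      exact pow_eq_zero_iff (by norm_num) |>.mp hq2
    refine ⟨0, Real.sqrt ((s - d)/2), ?_, ?_, ?_⟩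
    · rw [Real.sq_sqrt htb]; nlinarith
    · rw [Real.sq_sqrt htb]; nlinarith
    · rw [hq]; ring
  · have hsa : Real.sqrt ((s + d)/2) ^ 2 = (s + d)/2 := Real.sq_sqrt hta
    have hsane : Real.sqrt ((s + d)/2) ≠ 0 := by
      intro e; apply hz; rw [← hsa, e]; ring
    have hb2 : (q / Real.sqrt ((s + d)/2))^2 = (s - d)/2 := by
      rw [div_pow, hsa, ← hprod, mul_div_cancel_left₀ _ hz]
    refine ⟨Real.sqrt ((s + d)/2), q / Real.sqrt ((s + d)/2), ?_, ?_, ?_⟩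
    · rw [hsa, hb2]; ring
    · rw [hsa, hb2]; ring
    · rw [mul_comm, div_mul_cancel₀ q hsane]

theorem absd_le {x : Fin 4 → ℝ} (hx : x ∈ hypersimplex) :
    |x 0 + x 1 - 1| + |x 0 + x 2 - 1| + |x 0 + x 3 - 1| ≤ 1 := by
  obtain ⟨hb, hs⟩ := hx
  have h0 := hb 0; have h1 := hb 1; have h2 := hb 2; have h3 := hb 3
  rcases abs_cases (x 0 + x 1 - 1) with ⟨e1, _⟩ | ⟨e1, _⟩ <;>
    rcases abs_cases (x 0 + x 2 - 1) with ⟨e2, _⟩ | ⟨e2, _⟩ <;>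
      rcases abs_cases (x 0 + x 3 - 1) with ⟨e3, _⟩ | ⟨e3, _⟩ <;>
        rw [e1, e2, e3] <;> linarith

theorem Phi_surj : Function.Surjective Phi := by
  intro z
  obtain ⟨pr, rfl⟩ := Quot.exists_rep z
  obtain ⟨xs, ρ⟩ := pr
  obtain ⟨v, rfl⟩ := Quot.exists_rep ρ
  obtain ⟨x, hxmem⟩ := xs
  set dv : Fin 3 → ℝ := ![x 0 + x 1 - 1, x 0 + x 2 - 1, x 0 + x 3 - 1] with hdv
  have hdv0 : dv 0 = x 0 + x 1 - 1 := rfl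
  have hdv1 : dv 1 = x 0 + x 2 - 1 := rfl
  have hdv2 : dv 2 = x 0 + x 3 - 1 := rfl
  obtain ⟨i0, hi0⟩ : ∃ i, v.1 i ≠ 0 := by
    by_contra hcon; push_neg at hcon; exact v.2 (funext fun i => hcon i)
  have habs : 0 < |v.1 i0| := abs_pos.mpr hi0
  set L : ℝ := 1 / (2 * |v.1 i0|) with hL
  have hLpos : 0 < L := by positivity
  obtain ⟨lam, hlam_mem, hlam⟩ : ∃ lam ∈ Set.Icc (0:ℝ) L,
      Real.sqrt ((dv 0)^2 + 4*(lam * v.1 0)^2) + Real.sqrt ((dv 1)^2 + 4*(lam * v.1 1)^2)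
        + Real.sqrt ((dv 2)^2 + 4*(lam * v.1 2)^2) = 1 := by
    set f : ℝ → ℝ := fun t => Real.sqrt ((dv 0)^2 + 4*(t * v.1 0)^2)
      + Real.sqrt ((dv 1)^2 + 4*(t * v.1 1)^2)
      + Real.sqrt ((dv 2)^2 + 4*(t * v.1 2)^2) with hfdef
    have hfc : Continuous f := by
      apply Continuous.add
      apply Continuous.add
      · exact Continuous.sqrt (by continuity)
      · exact Continuous.sqrt (by continuity)
      · exact Continuous.sqrt (by continuity)
    have hf0 : f 0 ≤ 1 := by
      have e : f 0 = |dv 0| + |dv 1| + |dv 2| := by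
        simp [hfdef, Real.sqrt_sq_eq_abs]
      rw [e, hdv0, hdv1, hdv2]
      exact absd_le hxmem
    have hground : ∀ (i : Fin 3) (t : ℝ), 0 ≤ t →
        2*t*|v.1 i| ≤ Real.sqrt ((dv i)^2 + 4*(t * v.1 i)^2) := by
      intro i t ht
      have hsq : (2*t*|v.1 i|)^2 ≤ (dv i)^2 + 4*(t * v.1 i)^2 := by
        rw [mul_pow, mul_pow, sq_abs]
        nlinarith [sq_nonneg (dv i), sq_nonneg (t * v.1 i)]
      calc 2*t*|v.1 i| = Real.sqrt ((2*t*|v.1 i|)^2) := (Real.sqrt_sq (by positivity)).symm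
        _ ≤ _ := Real.sqrt_le_sqrt hsq
    have hfL : 1 ≤ f L := by
      have hterm : 2 * L * |v.1 i0| = 1 := by
        rw [hL]; field_simp
      have hkey := hground i0 L hLpos.le
      rw [hterm] at hkey
      have g0 := Real.sqrt_nonneg ((dv 0)^2 + 4*(L * v.1 0)^2)
      have g1 := Real.sqrt_nonneg ((dv 1)^2 + 4*(L * v.1 1)^2)
      have g2 := Real.sqrt_nonneg ((dv 2)^2 + 4*(L * v.1 2)^2)
      fin_cases i0
      · have hk : 1 ≤ Real.sqrt ((dv 0)^2 + 4*(L * v.1 0)^2) := hkey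
        show 1 ≤ Real.sqrt ((dv 0)^2 + 4*(L * v.1 0)^2) + _ + _
        linarith
      · have hk : 1 ≤ Real.sqrt ((dv 1)^2 + 4*(L * v.1 1)^2) := hkey
        show 1 ≤ Real.sqrt ((dv 0)^2 + 4*(L * v.1 0)^2) + Real.sqrt ((dv 1)^2 + 4*(L * v.1 1)^2) + _
        linarith
      · have hk : 1 ≤ Real.sqrt ((dv 2)^2 + 4*(L * v.1 2)^2) := hkey
        show (1:ℝ) ≤ _ + _ + Real.sqrt ((dv 2)^2 + 4*(L * v.1 2)^2)
        linarith
    have hsub := intermediate_value_Icc hLpos.le hfc.continuousOn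
    obtain ⟨lam, hmem, heq⟩ := hsub ⟨hf0, hfL⟩
    exact ⟨lam, hmem, heq⟩
  obtain ⟨a1, b1, ha1, he1, hq1⟩ := build_pair (dv 0) (lam * v.1 0)
  obtain ⟨a2, b2, ha2, he2, hq2⟩ := build_pair (dv 1) (lam * v.1 1)
  obtain ⟨a3, b3, ha3, he3, hq3⟩ := build_pair (dv 2) (lam * v.1 2)
  set w : Fin 6 → ℝ := ![a1, a2, a3, b3, b2, b1] with hw
  have hNv : Nv w = 1 := by
    show a1^2 + a2^2 + a3^2 + b3^2 + b2^2 + b1^2 = 1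
    linarith [ha1, ha2, ha3, hlam]
  have hwne : w ≠ 0 := by
    intro e
    rw [e] at hNv
    simp [Nv] at hNv
  have hsx : x 0 + x 1 + x 2 + x 3 = 2 := hxmem.2
  have hXv : Xv w = x := by
    funext i
    fin_cases i
    · show (a1^2 + a2^2 + a3^2)/Nv w = x 0
      rw [hNv, div_one]; linarith [ha1, ha2, ha3, hlam, he1, he2, he3]
    · show (a1^2 + b3^2 + b2^2)/Nv w = x 1
      rw [hNv, div_one]; linarith [ha1, ha2, ha3, hlam, he1, he2, he3]
    · show (a2^2 + b3^2 + b1^2)/Nv w = x 2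
      rw [hNv, div_one]; linarith [ha1, ha2, ha3, hlam, he1, he2, he3]
    · show (a3^2 + b2^2 + b1^2)/Nv w = x 3
      rw [hNv, div_one]; linarith [ha1, ha2, ha3, hlam, he1, he2, he3]
  have hPv : ∀ i, Pv w i = lam * v.1 i := by
    intro i
    fin_cases i
    · show a1 * b1 = lam * v.1 0; exact hq1
    · show a2 * b2 = lam * v.1 1; exact hq2
    · show a3 * b3 = lam * v.1 2; exact hq3
  refine ⟨Quot.mk _ (Quot.mk _ ⟨w, hwne⟩), ?_⟩
  show Quot.mk glueRel (Fmap ⟨w, hwne⟩) = Quot.mk glueRel (⟨x, hxmem⟩, Quot.mk projRelR2 v)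
  apply glue_eq_iff.mpr
  by_cases hPz : Pv w = 0
  · right
    refine ⟨Subtype.ext hXv, ?_⟩
    exact Pv_zero_boundary hwne hPz
  · left
    have hlamne : lam ≠ 0 := by
      intro e
      apply hPz
      funext i
      rw [hPv i, e]
      simp
    refine Prod.ext (Subtype.ext hXv) ?_
    show rho w = Quot.mk projRelR2 v
    unfold rho
    refine Quot.sound ⟨lam⁻¹, inv_ne_zero hlamne, funext fun k => ?_⟩
    show lam⁻¹ * (pvn w) k = v.1 k
    unfold pvn
    rw [if_neg hPz, hPv k]
    field_simp


/-! ### Continuity of the map -/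

theorem continuous_coord6 : ∀ k : Fin 6, Continuous fun a : {w : Fin 6 → ℝ // w ≠ 0} => a.1 k :=
  fun k => (continuous_apply k).comp continuous_subtype_val

theorem continuous_NvS : Continuous fun a : {w : Fin 6 → ℝ // w ≠ 0} => Nv a.1 := by
  have h := continuous_coord6
  show Continuous fun a : {w : Fin 6 → ℝ // w ≠ 0} =>
    a.1 0^2 + a.1 1^2 + a.1 2^2 + a.1 3^2 + a.1 4^2 + a.1 5^2
  exact ((((((h 0).pow 2).add ((h 1).pow 2)).add ((h 2).pow 2)).add
    ((h 3).pow 2)).add ((h 4).pow 2)).add ((h 5).pow 2)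

def Xsub (a : {w : Fin 6 → ℝ // w ≠ 0}) : ↥hypersimplex := ⟨Xv a.1, Xv_mem a.2⟩

theorem continuous_Xsub : Continuous Xsub := by
  have h := continuous_coord6
  apply Continuous.subtype_mk
  apply continuous_pi
  intro i
  fin_cases i
  · show Continuous fun a : {w : Fin 6 → ℝ // w ≠ 0} => (a.1 0^2 + a.1 1^2 + a.1 2^2)/Nv a.1
    exact ((((h 0).pow 2).add ((h 1).pow 2)).add ((h 2).pow 2)).div
      continuous_NvS (fun a => Nv_ne a.2)
  · show Continuous fun a : {w : Fin 6 → ℝ // w ≠ 0} => (a.1 0^2 + a.1 3^2 + a.1 4^2)/Nv a.1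
    exact ((((h 0).pow 2).add ((h 3).pow 2)).add ((h 4).pow 2)).div
      continuous_NvS (fun a => Nv_ne a.2)
  · show Continuous fun a : {w : Fin 6 → ℝ // w ≠ 0} => (a.1 1^2 + a.1 3^2 + a.1 5^2)/Nv a.1
    exact ((((h 1).pow 2).add ((h 3).pow 2)).add ((h 5).pow 2)).div
      continuous_NvS (fun a => Nv_ne a.2)
  · show Continuous fun a : {w : Fin 6 → ℝ // w ≠ 0} => (a.1 2^2 + a.1 4^2 + a.1 5^2)/Nv a.1
    exact ((((h 2).pow 2).add ((h 4).pow 2)).add ((h 5).pow 2)).div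
      continuous_NvS (fun a => Nv_ne a.2)

theorem continuous_Pv : Continuous Pv := by
  apply continuous_pi
  intro i
  fin_cases i
  · show Continuous fun w : Fin 6 → ℝ => w 0 * w 5
    exact (continuous_apply 0).mul (continuous_apply 5)
  · show Continuous fun w : Fin 6 → ℝ => w 1 * w 4
    exact (continuous_apply 1).mul (continuous_apply 4)
  · show Continuous fun w : Fin 6 → ℝ => w 2 * w 3
    exact (continuous_apply 2).mul (continuous_apply 3)

/-! ### Compactness of `RP2` -/

def Nv3 (v : Fin 3 → ℝ) : ℝ := v 0^2 + v 1^2 + v 2^2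

theorem Nv3_pos {v : Fin 3 → ℝ} (h : v ≠ 0) : 0 < Nv3 v := by
  rcases lt_or_ge 0 (Nv3 v) with h' | h'
  · exact h'
  · exfalso; apply h
    have h0 := sq_nonneg (v 0); have h1 := sq_nonneg (v 1); have h2 := sq_nonneg (v 2)
    unfold Nv3 at h'
    have e : ∀ k : Fin 3, v k ^ 2 = 0 → v k = 0 :=
      fun k hk => pow_eq_zero_iff (n := 2) (by norm_num) |>.mp hk
    have e0 := e 0 (le_antisymm (by linarith) (sq_nonneg _))
    have e1 := e 1 (le_antisymm (by linarith) (sq_nonneg _))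
    have e2 := e 2 (le_antisymm (by linarith) (sq_nonneg _))
    funext i
    fin_cases i
    · exact e0
    · exact e1
    · exact e2

theorem Nv3_ne {v : Fin 3 → ℝ} (h : v ≠ 0) : Nv3 v ≠ 0 := ne_of_gt (Nv3_pos h)

theorem continuous_Nv3 : Continuous Nv3 := by
  show Continuous fun v : Fin 3 → ℝ => v 0^2 + v 1^2 + v 2^2
  exact (((continuous_apply (0:Fin 3)).pow 2).add ((continuous_apply 1).pow 2)).add
    ((continuous_apply 2).pow 2)

theorem sphere3_compact : IsCompact {v : Fin 3 → ℝ | Nv3 v = 1} := by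
  apply IsCompact.of_isClosed_subset (isCompact_univ_pi fun _ : Fin 3 => isCompact_Icc (a := (-1:ℝ)) (b := 1))
  · exact isClosed_eq continuous_Nv3 continuous_const
  · intro v hv
    have hv' : Nv3 v = 1 := hv
    intro i _
    have h0 := sq_nonneg (v 0); have h1 := sq_nonneg (v 1); have h2 := sq_nonneg (v 2)
    unfold Nv3 at hv'
    have hle : v i ^ 2 ≤ 1 := by
      fin_cases i
      · show v 0^2 ≤ 1; linarith
      · show v 1^2 ≤ 1; linarith
      · show v 2^2 ≤ 1; linarith
    constructor
    · nlinarith [sq_nonneg (v i + 1)]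
    · nlinarith [sq_nonneg (v i - 1)]

instance : CompactSpace RP2 := by
  constructor
  have hsub : {v : Fin 3 → ℝ | Nv3 v = 1} ⊆ Set.range (Subtype.val : {v : Fin 3 → ℝ // v ≠ 0} → _) := by
    intro v hv
    rw [Subtype.range_coe_subtype]
    intro e
    have : Nv3 v = 1 := hv
    rw [e] at this
    simp [Nv3] at this
  have hpre : IsCompact (Subtype.val ⁻¹' {v : Fin 3 → ℝ | Nv3 v = 1} :
      Set {v : Fin 3 → ℝ // v ≠ 0}) :=
    (Topology.IsInducing.subtypeVal.isCompact_preimage_iff hsub).mpr sphere3_compact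
  have himg : Quot.mk projRelR2 '' (Subtype.val ⁻¹' {v : Fin 3 → ℝ | Nv3 v = 1}) = Set.univ := by
    apply Set.eq_univ_of_forall
    intro z
    obtain ⟨a, rfl⟩ := Quot.exists_rep z
    have hn := Nv3_pos a.2
    set r := Real.sqrt (Nv3 a.1) with hr
    have hrpos : 0 < r := Real.sqrt_pos.mpr hn
    have hr2 : r^2 = Nv3 a.1 := Real.sq_sqrt hn.le
    have hne : (fun k => r⁻¹ * a.1 k) ≠ 0 := by
      intro e
      apply a.2
      funext k
      have := congrFun e k
      rcases mul_eq_zero.mp this with h' | h'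
      · exact absurd h' (inv_ne_zero (ne_of_gt hrpos))
      · exact h'
    refine ⟨⟨fun k => r⁻¹ * a.1 k, hne⟩, ?_, ?_⟩
    · show (r⁻¹ * a.1 0)^2 + (r⁻¹ * a.1 1)^2 + (r⁻¹ * a.1 2)^2 = 1
      have e : (r⁻¹ * a.1 0)^2 + (r⁻¹ * a.1 1)^2 + (r⁻¹ * a.1 2)^2 = (r⁻¹)^2 * Nv3 a.1 := by
        unfold Nv3; ring
      rw [e, ← hr2]
      field_simp
    · apply Quot.sound
      refine ⟨r, ne_of_gt hrpos, funext fun k => ?_⟩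
      show r * (r⁻¹ * a.1 k) = a.1 k
      field_simp
  rw [← himg]
  exact hpre.image continuous_quot_mk

/-! ### Compactness of `RP5` -/

theorem continuous_Nv : Continuous Nv := by
  show Continuous fun w : Fin 6 → ℝ => w 0^2 + w 1^2 + w 2^2 + w 3^2 + w 4^2 + w 5^2
  exact ((((((continuous_apply (0:Fin 6)).pow 2).add ((continuous_apply 1).pow 2)).add
    ((continuous_apply 2).pow 2)).add ((continuous_apply 3).pow 2)).add
    ((continuous_apply 4).pow 2)).add ((continuous_apply 5).pow 2)

theorem sphere6_compact : IsCompact {w : Fin 6 → ℝ | Nv w = 1} := by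
  apply IsCompact.of_isClosed_subset (isCompact_univ_pi fun _ : Fin 6 => isCompact_Icc (a := (-1:ℝ)) (b := 1))
  · exact isClosed_eq continuous_Nv continuous_const
  · intro w hw
    have hw' : Nv w = 1 := hw
    intro i _
    have h0 := sq_nonneg (w 0); have h1 := sq_nonneg (w 1); have h2 := sq_nonneg (w 2)
    have h3 := sq_nonneg (w 3); have h4 := sq_nonneg (w 4); have h5 := sq_nonneg (w 5)
    unfold Nv at hw'
    have hle : w i ^ 2 ≤ 1 := by
      fin_cases i
      · show w 0^2 ≤ 1; linarith
      · show w 1^2 ≤ 1; linarith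
      · show w 2^2 ≤ 1; linarith
      · show w 3^2 ≤ 1; linarith
      · show w 4^2 ≤ 1; linarith
      · show w 5^2 ≤ 1; linarith
    constructor
    · nlinarith [sq_nonneg (w i + 1)]
    · nlinarith [sq_nonneg (w i - 1)]

instance : CompactSpace RP5 := by
  constructor
  have hsub : {w : Fin 6 → ℝ | Nv w = 1} ⊆ Set.range (Subtype.val : {w : Fin 6 → ℝ // w ≠ 0} → _) := by
    intro w hw
    rw [Subtype.range_coe_subtype]
    intro e
    have : Nv w = 1 := hw
    rw [e] at this
    simp [Nv] at this
  have hpre : IsCompact (Subtype.val ⁻¹' {w : Fin 6 → ℝ | Nv w = 1} :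
      Set {w : Fin 6 → ℝ // w ≠ 0}) :=
    (Topology.IsInducing.subtypeVal.isCompact_preimage_iff hsub).mpr sphere6_compact
  have himg : Quot.mk projRelR '' (Subtype.val ⁻¹' {w : Fin 6 → ℝ | Nv w = 1}) = Set.univ := by
    apply Set.eq_univ_of_forall
    intro z
    obtain ⟨a, rfl⟩ := Quot.exists_rep z
    have hn := Nv_pos a.2
    set r := Real.sqrt (Nv a.1) with hr
    have hrpos : 0 < r := Real.sqrt_pos.mpr hn
    have hr2 : r^2 = Nv a.1 := Real.sq_sqrt hn.le
    have hne : (fun k => r⁻¹ * a.1 k) ≠ 0 := by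
      intro e
      apply a.2
      funext k
      have := congrFun e k
      rcases mul_eq_zero.mp this with h' | h'
      · exact absurd h' (inv_ne_zero (ne_of_gt hrpos))
      · exact h'
    refine ⟨⟨fun k => r⁻¹ * a.1 k, hne⟩, ?_, ?_⟩
    · show (r⁻¹ * a.1 0)^2 + (r⁻¹ * a.1 1)^2 + (r⁻¹ * a.1 2)^2 + (r⁻¹ * a.1 3)^2
          + (r⁻¹ * a.1 4)^2 + (r⁻¹ * a.1 5)^2 = 1
      have e : (r⁻¹ * a.1 0)^2 + (r⁻¹ * a.1 1)^2 + (r⁻¹ * a.1 2)^2 + (r⁻¹ * a.1 3)^2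
          + (r⁻¹ * a.1 4)^2 + (r⁻¹ * a.1 5)^2 = (r⁻¹)^2 * Nv a.1 := by
        unfold Nv; ring
      rw [e, ← hr2]
      field_simp
    · apply Quot.sound
      refine ⟨r, ne_of_gt hrpos, funext fun k => ?_⟩
      show r * (r⁻¹ * a.1 k) = a.1 k
      field_simp
  rw [← himg]
  exact hpre.image continuous_quot_mk


/-! ### Continuity of `FQ` -/

theorem continuous_FQ : Continuous FQ := by
  rw [continuous_iff_continuousAt]
  intro a
  by_cases hP : Pv a.1 = 0
  · -- collapsed fibre: use the tube lemma
    rw [continuousAt_def]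
    intro A hA
    obtain ⟨U, hUA, hUopen, hFU⟩ := mem_nhds_iff.mp hA
    have hVopen : IsOpen (Quot.mk glueRel ⁻¹' U) := hUopen.preimage continuous_quot_mk
    have hsat : ∀ t : RP2, (Xsub a, t) ∈ Quot.mk glueRel ⁻¹' U := by
      intro t
      show Quot.mk glueRel (Xsub a, t) ∈ U
      have he : Quot.mk glueRel (Xsub a, t) = Quot.mk glueRel (Fmap a) := by
        apply Quot.sound
        exact Or.inr ⟨rfl, Pv_zero_boundary a.2 hP⟩
      rw [he]
      exact hFU
    have hsub0 : {Xsub a} ×ˢ (Set.univ : Set RP2) ⊆ Quot.mk glueRel ⁻¹' U := by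
      rintro ⟨p1, p2⟩ ⟨hp1, -⟩
      have hp1' : p1 = Xsub a := hp1
      rw [hp1']
      exact hsat p2
    obtain ⟨u, t, huo, -, hxu, htu, hsub⟩ :=
      generalized_tube_lemma isCompact_singleton isCompact_univ hVopen hsub0
    have hnb : Xsub ⁻¹' u ∈ nhds a :=
      (huo.preimage continuous_Xsub).mem_nhds (hxu rfl)
    apply Filter.mem_of_superset hnb
    intro b hb
    show FQ b ∈ A
    apply hUA
    exact hsub ⟨hb, htu trivial⟩
  · -- regular point
    have hopen : IsOpen {w : Fin 6 → ℝ | Pv w ≠ 0} :=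
      isOpen_compl_singleton.preimage continuous_Pv
    have hnhd : {w : Fin 6 → ℝ | Pv w ≠ 0} ∈ nhds a.1 := hopen.mem_nhds hP
    have hpvn_cont : ContinuousAt pvn a.1 := by
      apply ContinuousAt.congr continuous_Pv.continuousAt
      filter_upwards [hnhd] with w hw
      exact (if_neg hw).symm
    have hsub_cont : ContinuousAt
        (fun w => (⟨pvn w, pvn_ne w⟩ : {v : Fin 3 → ℝ // v ≠ 0})) a.1 :=
      Topology.IsInducing.subtypeVal.continuousAt_iff.mpr hpvn_cont
    have hrho_cont : ContinuousAt rho a.1 := by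
      show ContinuousAt (fun w => Quot.mk projRelR2 (⟨pvn w, pvn_ne w⟩ :
        {v : Fin 3 → ℝ // v ≠ 0})) a.1
      exact ContinuousAt.comp continuous_quot_mk.continuousAt hsub_cont
    show ContinuousAt (fun b : {w : Fin 6 → ℝ // w ≠ 0} =>
      Quot.mk glueRel (Xsub b, rho b.1)) a
    apply ContinuousAt.comp continuous_quot_mk.continuousAt
    exact ContinuousAt.prodMk continuous_Xsub.continuousAt
      (ContinuousAt.comp (g := rho) (f := Subtype.val) hrho_cont
        continuous_subtype_val.continuousAt)

theorem continuous_Phi : Continuous Phi :=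
  continuous_quot_lift _ (continuous_quot_lift _ continuous_FQ)

/-! ### Hausdorffness of the glued product -/

def Bv (x : Fin 4 → ℝ) : ℝ :=
  (x 0 * (1 - x 0)) * (x 1 * (1 - x 1)) * (x 2 * (1 - x 2)) * (x 3 * (1 - x 3))

theorem Bv_zero {x : Fin 4 → ℝ} (h : x ∈ hypersimplexBoundary) : Bv x = 0 := by
  obtain ⟨-, i, hi⟩ := h
  have key : (x 0 = 0 ∨ x 0 = 1) ∨ (x 1 = 0 ∨ x 1 = 1) ∨ (x 2 = 0 ∨ x 2 = 1)
      ∨ (x 3 = 0 ∨ x 3 = 1) := by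
    fin_cases i
    · exact Or.inl hi
    · exact Or.inr (Or.inl hi)
    · exact Or.inr (Or.inr (Or.inl hi))
    · exact Or.inr (Or.inr (Or.inr hi))
  unfold Bv
  rcases key with (h'|h')|(h'|h')|(h'|h')|(h'|h') <;> rw [h'] <;> ring

theorem Bv_ne {x : Fin 4 → ℝ} (hmem : x ∈ hypersimplex)
    (h : x ∉ hypersimplexBoundary) : Bv x ≠ 0 := by
  have hni : ∀ i, x i ≠ 0 ∧ x i ≠ 1 := by
    intro i
    constructor
    · intro e; exact h ⟨hmem, i, Or.inl e⟩
    · intro e; exact h ⟨hmem, i, Or.inr e⟩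
  have hf : ∀ i, x i * (1 - x i) ≠ 0 := fun i =>
    mul_ne_zero (hni i).1 (sub_ne_zero.mpr (Ne.symm (hni i).2))
  exact mul_ne_zero (mul_ne_zero (mul_ne_zero (hf 0) (hf 1)) (hf 2)) (hf 3)

def Mv (v : {v : Fin 3 → ℝ // v ≠ 0}) : Fin 3 → Fin 3 → ℝ :=
  fun i j => v.1 i * v.1 j / Nv3 v.1

theorem Mv_wd (u v : {v : Fin 3 → ℝ // v ≠ 0}) (h : projRelR2 u v) : Mv u = Mv v := by
  obtain ⟨c, hc, he⟩ := h
  have e : ∀ k, v.1 k = c * u.1 k := fun k => (congrFun he k).symm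
  have hN : Nv3 v.1 = c^2 * Nv3 u.1 := by
    unfold Nv3; rw [e 0, e 1, e 2]; ring
  funext i j
  show u.1 i * u.1 j / Nv3 u.1 = v.1 i * v.1 j / Nv3 v.1
  rw [e i, e j, hN]
  have e2 : c * u.1 i * (c * u.1 j) = c^2 * (u.1 i * u.1 j) := by ring
  rw [e2, mul_div_mul_left _ _ (pow_ne_zero 2 hc)]

theorem Mv_inj (u v : {v : Fin 3 → ℝ // v ≠ 0}) (h : Mv u = Mv v) : projRelR2 u v := by
  have hNu := Nv3_pos u.2
  have hNv := Nv3_pos v.2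
  obtain ⟨i0, hi0⟩ : ∃ i, u.1 i ≠ 0 := by
    by_contra hcon; push_neg at hcon; exact u.2 (funext fun i => hcon i)
  have h00 : u.1 i0 * u.1 i0 / Nv3 u.1 = v.1 i0 * v.1 i0 / Nv3 v.1 :=
    congrFun (congrFun h i0) i0
  have hv0 : v.1 i0 ≠ 0 := by
    intro e
    rw [e] at h00
    have hpos : 0 < u.1 i0 * u.1 i0 / Nv3 u.1 :=
      div_pos (mul_self_pos.mpr hi0) hNu
    rw [h00] at hpos
    simp at hpos
  refine ⟨Nv3 v.1 * u.1 i0 / (Nv3 u.1 * v.1 i0),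
    div_ne_zero (mul_ne_zero (ne_of_gt hNv) hi0) (mul_ne_zero (ne_of_gt hNu) hv0),
    funext fun k => ?_⟩
  have hk : u.1 i0 * u.1 k / Nv3 u.1 = v.1 i0 * v.1 k / Nv3 v.1 :=
    congrFun (congrFun h i0) k
  show Nv3 v.1 * u.1 i0 / (Nv3 u.1 * v.1 i0) * u.1 k = v.1 k
  field_simp at hk ⊢
  linear_combination hk

def MQ : RP2 → Fin 3 → Fin 3 → ℝ := Quot.lift Mv Mv_wd

theorem continuous_Mv : Continuous Mv := by
  apply continuous_pi
  intro i
  apply continuous_pi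
  intro j
  show Continuous fun v : {v : Fin 3 → ℝ // v ≠ 0} => v.1 i * v.1 j / Nv3 v.1
  have hc : ∀ k : Fin 3, Continuous fun v : {v : Fin 3 → ℝ // v ≠ 0} => v.1 k :=
    fun k => (continuous_apply k).comp continuous_subtype_val
  have hN : Continuous fun v : {v : Fin 3 → ℝ // v ≠ 0} => Nv3 v.1 := by
    show Continuous fun v : {v : Fin 3 → ℝ // v ≠ 0} => v.1 0^2 + v.1 1^2 + v.1 2^2
    exact (((hc 0).pow 2).add ((hc 1).pow 2)).add ((hc 2).pow 2)
  exact ((hc i).mul (hc j)).div hN (fun v => Nv3_ne v.2)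

theorem continuous_MQ : Continuous MQ := continuous_quot_lift _ continuous_Mv

def Gm (p : ↥hypersimplex × RP2) : (Fin 4 → ℝ) × (Fin 3 → Fin 3 → ℝ) :=
  (p.1.1, fun i j => Bv p.1.1 * MQ p.2 i j)

theorem Gm_wd (p q : ↥hypersimplex × RP2) (h : glueRel p q) : Gm p = Gm q := by
  rcases h with rfl | ⟨e, hb⟩
  · rfl
  · have e' : p.1.1 = q.1.1 := congrArg Subtype.val e
    have hB : Bv p.1.1 = 0 := Bv_zero hb
    have hB' : Bv q.1.1 = 0 := by rw [← e']; exact hB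
    refine Prod.ext e' ?_
    show (fun i j => Bv p.1.1 * MQ p.2 i j) = fun i j => Bv q.1.1 * MQ q.2 i j
    funext i j
    rw [hB, hB', zero_mul, zero_mul]

def GQ : Quot glueRel → (Fin 4 → ℝ) × (Fin 3 → Fin 3 → ℝ) := Quot.lift Gm Gm_wd

theorem continuous_GQ : Continuous GQ := by
  apply continuous_quot_lift
  apply Continuous.prodMk
  · exact continuous_subtype_val.comp continuous_fst
  · apply continuous_pi
    intro i
    apply continuous_pi
    intro j
    have hx : ∀ k : Fin 4, Continuous fun p : ↥hypersimplex × RP2 => p.1.1 k :=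
      fun k => (continuous_apply k).comp (continuous_subtype_val.comp continuous_fst)
    have hBc : Continuous fun p : ↥hypersimplex × RP2 => Bv p.1.1 := by
      show Continuous fun p : ↥hypersimplex × RP2 =>
        (p.1.1 0 * (1 - p.1.1 0)) * (p.1.1 1 * (1 - p.1.1 1)) * (p.1.1 2 * (1 - p.1.1 2))
          * (p.1.1 3 * (1 - p.1.1 3))
      exact ((((hx 0).mul (continuous_const.sub (hx 0))).mul
        ((hx 1).mul (continuous_const.sub (hx 1)))).mul
        ((hx 2).mul (continuous_const.sub (hx 2)))).mul
        ((hx 3).mul (continuous_const.sub (hx 3)))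
    have hMc : Continuous fun p : ↥hypersimplex × RP2 => MQ p.2 i j :=
      (continuous_apply j).comp ((continuous_apply i).comp
        (continuous_MQ.comp continuous_snd))
    exact hBc.mul hMc

theorem GQ_inj : Function.Injective GQ := by
  intro z1 z2 h
  obtain ⟨p, rfl⟩ := Quot.exists_rep z1
  obtain ⟨q, rfl⟩ := Quot.exists_rep z2
  have hfst : p.1.1 = q.1.1 := congrArg Prod.fst h
  by_cases hbd : p.1.1 ∈ hypersimplexBoundary
  · exact Quot.sound (Or.inr ⟨Subtype.ext hfst, hbd⟩)
  · have hB := Bv_ne p.1.2 hbd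
    have hsnd : (fun i j => Bv p.1.1 * MQ p.2 i j) = fun i j => Bv q.1.1 * MQ q.2 i j :=
      congrArg Prod.snd h
    have hM : MQ p.2 = MQ q.2 := by
      funext i j
      have hij := congrFun (congrFun hsnd i) j
      rw [← hfst] at hij
      exact mul_left_cancel₀ hB hij
    obtain ⟨u, hu⟩ := Quot.exists_rep p.2
    obtain ⟨v, hv⟩ := Quot.exists_rep q.2
    have hMuv : Mv u = Mv v := by rw [← hu, ← hv] at hM; exact hM
    have h2 : p.2 = q.2 := by
      rw [← hu, ← hv]
      exact Quot.sound (Mv_inj u v hMuv)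
    exact Quot.sound (Or.inl (Prod.ext (Subtype.ext hfst) h2))

instance : T2Space (Quot glueRel) := T2Space.of_injective_continuous GQ_inj continuous_GQ

end

end Aux17

/-- the orbit space `ℝP⁵/ℤ₂⁴` is homeomorphic to `(Δ₄,₂ × ℝP²)/≈`, where `≈`
collapses the `ℝP²`-factor over each boundary point of the octahedron `Δ₄,₂`. -/
theorem RP5_orbitSpace_homeomorph_glued_product :
    Nonempty (Quot realOrbitRel ≃ₜ Quot glueRel) := by
  refine ⟨Continuous.homeoOfEquivCompactToT2
    (f := Equiv.ofBijective Aux17.Phi ⟨Aux17.Phi_inj, Aux17.Phi_surj⟩) ?_⟩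
  exact Aux17.continuous_Phi
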